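/- Let 0 < α < 1, 0 < β < 1, τ > 0, σ_e > 0, p > 0, and c, θ be real. Let I ⊆ (0,∞) be an open interval and x : I → (0,1) a differentiable function satisfying, for every t ∈ I, the identity τσ_e·x(t)^{−α} − (τσ_e·t^{1−β}/(1−β))·(1−x(t))^{−α} + c − (1−θ)p = 0. Then for every t ∈ I, x'(t) = −t^{−β}·(1−x(t))^{−α} / ( α·[ x(t)^{−α−1} + (t^{1−β}/(1−β))·(1−x(t))^{−α−1} ] ), and in particular x'(t) < 0. -/

import Mathlib

/-- Implicit first derivative of the mobile user's best response with respect
to the caching effort `t`: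
`x'(t) = -t^(-β)(1-x)^(-α) / (α [x^(-α-1) + (t^(1-β)/(1-β))(1-x)^(-α-1)]) < 0`. -/
theorem best_response_deriv_t (α β τ σe c p θ a b : ℝ) (x : ℝ → ℝ)
    (hα0 : 0 < α) (hα1 : α < 1) (hβ0 : 0 < β) (hβ1 : β < 1)
    (hτ : 0 < τ) (hσe : 0 < σe) (hp : 0 < p)
    (hI : Set.Ioo a b ⊆ Set.Ioi (0 : ℝ))
    (hmem : ∀ t ∈ Set.Ioo a b, x t ∈ Set.Ioo (0 : ℝ) 1)
    (hdiff : ∀ t ∈ Set.Ioo a b, DifferentiableAt ℝ x t)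
    (hFOC : ∀ t ∈ Set.Ioo a b,
      τ * σe * x t ^ (-α) - τ * σe * t ^ (1 - β) / (1 - β) * (1 - x t) ^ (-α)
        + c - (1 - θ) * p = 0) :
    ∀ t ∈ Set.Ioo a b,
      deriv x t
        = -(t ^ (-β) * (1 - x t) ^ (-α))
            / (α * (x t ^ (-α - 1) + t ^ (1 - β) / (1 - β) * (1 - x t) ^ (-α - 1))) ∧
      deriv x t < 0 := by
  intro t ht
  obtain ⟨hx0, hx1⟩ := hmem t ht
  have ht0 : (0:ℝ) < t := hI ht
  have hβ' : (1:ℝ) - β ≠ 0 := by intro h; linarith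
  have h1x : 0 < 1 - x t := by linarith
  have hxd : HasDerivAt x (deriv x t) t := (hdiff t ht).hasDerivAt
  set x' := deriv x t with hx'def
  -- derivative of x s ^ (-α)
  have h1 : HasDerivAt (fun s => x s ^ (-α)) (-α * x t ^ (-α - 1) * x') t := by
    have h := hxd.rpow_const (p := -α) (Or.inl (ne_of_gt hx0))
    convert h using 1; ring
  -- derivative of s ^ (1 - β)
  have h2 : HasDerivAt (fun s : ℝ => s ^ (1 - β)) ((1 - β) * t ^ (-β)) t := by
    have h := Real.hasDerivAt_rpow_const (x := t) (p := 1 - β) (Or.inl (ne_of_gt ht0))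
    simpa [show (1:ℝ) - β - 1 = -β by ring] using h
  -- derivative of (1 - x s) ^ (-α)
  have h3 : HasDerivAt (fun s => (1 - x s) ^ (-α))
      (-α * (1 - x t) ^ (-α - 1) * (0 - x')) t := by
    have h := ((hasDerivAt_const t (1:ℝ)).sub hxd).rpow_const (p := -α) (Or.inl (ne_of_gt h1x))
    convert h using 1
    · rfl
    · simp only [Pi.sub_apply]; ring
  -- derivative of the product term
  have h4 : HasDerivAt (fun s : ℝ => τ * σe * s ^ (1 - β) / (1 - β) * (1 - x s) ^ (-α))
      ((τ * σe * ((1 - β) * t ^ (-β)) / (1 - β)) * (1 - x t) ^ (-α)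
        + (τ * σe * t ^ (1 - β) / (1 - β)) * (-α * (1 - x t) ^ (-α - 1) * (0 - x'))) t := by
    exact ((h2.const_mul (τ * σe)).div_const (1 - β)).mul h3
  -- derivative of the full FOC expression
  have hg : HasDerivAt (fun s => τ * σe * x s ^ (-α)
        - τ * σe * s ^ (1 - β) / (1 - β) * (1 - x s) ^ (-α) + c - (1 - θ) * p)
      (τ * σe * (-α * x t ^ (-α - 1) * x')
        - ((τ * σe * ((1 - β) * t ^ (-β)) / (1 - β)) * (1 - x t) ^ (-α)
          + (τ * σe * t ^ (1 - β) / (1 - β)) * (-α * (1 - x t) ^ (-α - 1) * (0 - x')))) t := by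
    simpa using (((h1.const_mul (τ * σe)).sub h4).add_const c).sub_const ((1 - θ) * p)
  -- the FOC expression is eventually zero, so its derivative vanishes
  have hev : (fun s => τ * σe * x s ^ (-α)
        - τ * σe * s ^ (1 - β) / (1 - β) * (1 - x s) ^ (-α) + c - (1 - θ) * p)
      =ᶠ[nhds t] fun _ => (0:ℝ) := by
    filter_upwards [isOpen_Ioo.mem_nhds ht] with s hs using hFOC s hs
  have hzero : τ * σe * (-α * x t ^ (-α - 1) * x')
        - ((τ * σe * ((1 - β) * t ^ (-β)) / (1 - β)) * (1 - x t) ^ (-α)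
          + (τ * σe * t ^ (1 - β) / (1 - β)) * (-α * (1 - x t) ^ (-α - 1) * (0 - x'))) = 0 := by
    have := hg.deriv
    rw [hev.deriv_eq, deriv_const] at this
    linarith [this]
  -- positivity facts
  have hA1 : 0 < x t ^ (-α - 1) := Real.rpow_pos_of_pos hx0 _
  have hB : 0 < (1 - x t) ^ (-α) := Real.rpow_pos_of_pos h1x _
  have hB1 : 0 < (1 - x t) ^ (-α - 1) := Real.rpow_pos_of_pos h1x _
  have hT : 0 < t ^ (1 - β) := Real.rpow_pos_of_pos ht0 _
  have hT' : 0 < t ^ (-β) := Real.rpow_pos_of_pos ht0 _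
  have hβpos : 0 < 1 - β := by linarith
  have hD : 0 < α * (x t ^ (-α - 1) + t ^ (1 - β) / (1 - β) * (1 - x t) ^ (-α - 1)) := by
    positivity
  have hN : 0 < t ^ (-β) * (1 - x t) ^ (-α) := by positivity
  have hmain : x' = -(t ^ (-β) * (1 - x t) ^ (-α))
      / (α * (x t ^ (-α - 1) + t ^ (1 - β) / (1 - β) * (1 - x t) ^ (-α - 1))) := by
    rw [eq_div_iff (ne_of_gt hD)]
    have hτσ : τ * σe ≠ 0 := by positivity
    field_simp at hzero ⊢
    nlinarith [hzero, mul_pos hτ hσe]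
  refine ⟨hmain, ?_⟩
  rw [hmain]
  exact div_neg_of_neg_of_pos (by linarith) hD
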